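/- Let d > 2 and work in ℂ² ⊗ ℂ^d. The linear span S_{P,1} of the Parthasarathy space S_P and the van der Monde vector z₁ contains only finitely many one-dimensional subspaces spanned by product vectors; their number (the product index of S_{P,1}) equals d if d is odd, and equals d − 1 if d is even. The product vectors other than multiples of z₁ are, up to scalars, the vectors (|0⟩ + α|1⟩) ⊗ (Σ_{r=0}^{d−1} c_r |r⟩) where α = −e^{2πit/d} for 1 ≤ t ≤ d−1 with t ≠ d/2, and c_r = (2 + (−1)^r α^r (α − 1))/(1 + α). -/

import Mathlib

noncomputable section

/-- the Hilbert space ℂ² ⊗ ℂ^d, realized as ℂ^{2d} -/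
abbrev H2d (d : ℕ) : Type := EuclideanSpace ℂ (Fin 2 × Fin d)

/-- standard basis vector of ℂ² -/
def ket2 (i : Fin 2) : EuclideanSpace ℂ (Fin 2) := EuclideanSpace.single i 1

/-- elementary tensor u ⊗ v with u ∈ ℂ², v ∈ ℂ^d -/
def tp2d (d : ℕ) (u : EuclideanSpace ℂ (Fin 2)) (v : EuclideanSpace ℂ (Fin d)) : H2d d :=
  WithLp.toLp 2 (fun p : Fin 2 × Fin d => u p.1 * v p.2)

/-- the van der Monde vector z_λ = (|0⟩ + λ|1⟩) ⊗ (Σ_r λ^r |r⟩) -/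
def z2d (d : ℕ) (lam : ℂ) : H2d d := WithLp.toLp 2 (fun p : Fin 2 × Fin d => lam ^ (p.1 : ℕ) * lam ^ (p.2 : ℕ))

/-- the van der Monde vector z_∞ = |1⟩ ⊗ |d−1⟩ -/
def z2dinf (d : ℕ) : H2d d :=
  WithLp.toLp 2 (fun p : Fin 2 × Fin d => (if p.1 = 1 then 1 else 0) * (if (p.2 : ℕ) = d - 1 then 1 else 0))

/-- the span of all van der Monde vectors -/
def F2d (d : ℕ) : Submodule ℂ (H2d d) :=
  Submodule.span ℂ (insert (z2dinf d) (Set.range (z2d d)))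

/-- the Parthasarathy completely entangled subspace of ℂ² ⊗ ℂ^d -/
def SP2d (d : ℕ) : Submodule ℂ (H2d d) := (F2d d)ᗮ

/-- the perturbation of `S_P` by the van der Monde vector `z₁` -/
def SP2d1 (d : ℕ) : Submodule ℂ (H2d d) := SP2d d ⊔ Submodule.span ℂ {z2d d 1}

/-- the set of one-dimensional subspaces of `T` spanned by (nonzero) product vectors -/
def prodLines2d (d : ℕ) (T : Submodule ℂ (H2d d)) : Set (Submodule ℂ (H2d d)) :=
  {L | ∃ ξ : H2d d, ξ ≠ 0 ∧ ξ ∈ T ∧ (∃ u v, ξ = tp2d d u v) ∧ L = Submodule.span ℂ {ξ}}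

/-- α_t = −e^{2πit/d} -/
def alpha2d (d t : ℕ) : ℂ := -Complex.exp (2 * Real.pi * Complex.I * t / d)

/-- the second factor Σ_r c_r |r⟩ with c_r = (2 + (−1)^r α^r (α − 1))/(1 + α) -/
def cvec (d : ℕ) (a : ℂ) : EuclideanSpace ℂ (Fin d) :=
  WithLp.toLp 2 (fun r : Fin d => (2 + (-1) ^ (r : ℕ) * a ^ (r : ℕ) * (a - 1)) / (1 + a))

/-- the new product vector corresponding to the parameter `t` -/
def pvec (d t : ℕ) : H2d d :=
  tp2d d (ket2 0 + alpha2d d t • ket2 1) (cvec d (alpha2d d t))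

open Polynomial in
/-- the polynomial attached to a vector -/
def Pxi (d : ℕ) (ξ : H2d d) : Polynomial ℂ :=
  ∑ p : Fin 2 × Fin d, C (ξ p) * X ^ ((p.1 : ℕ) + (p.2 : ℕ))

open Polynomial in
def Vpoly (d : ℕ) (v : EuclideanSpace ℂ (Fin d)) : Polynomial ℂ :=
  ∑ r : Fin d, C (v r) * X ^ (r : ℕ)

open Polynomial in
def Upoly (u : EuclideanSpace ℂ (Fin 2)) : Polynomial ℂ := C (u 0) + C (u 1) * X

open Polynomial

lemma Pxi_tp2d (d : ℕ) (u : EuclideanSpace ℂ (Fin 2)) (v : EuclideanSpace ℂ (Fin d)) :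
    Pxi d (tp2d d u v) = Upoly u * Vpoly d v := by
  have : Upoly u = ∑ s : Fin 2, C (u s) * X ^ (s : ℕ) := by
    simp [Upoly, Fin.sum_univ_two]
  rw [this, Vpoly, Finset.sum_mul_sum, Pxi, Fintype.sum_prod_type]
  refine Finset.sum_congr rfl fun s _ => Finset.sum_congr rfl fun r _ => ?_
  simp [tp2d, pow_add]
  ring
lemma Pxi_sub_smul (d : ℕ) (ξ ζ : H2d d) (c : ℂ) :
    Pxi d (ξ - c • ζ) = Pxi d ξ - C c * Pxi d ζ := by
  simp only [Pxi, Finset.mul_sum, ← Finset.sum_sub_distrib]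
  refine Finset.sum_congr rfl fun p _ => ?_
  have : (ξ - c • ζ) p = ξ p - c * ζ p := rfl
  rw [this, map_sub, map_mul]
  ring

lemma inner_z2d (d : ℕ) (lam : ℂ) (ξ : H2d d) :
    inner ℂ (z2d d lam) ξ = eval (starRingEnd ℂ lam) (Pxi d ξ) := by
  rw [PiLp.inner_apply, Pxi, eval_finset_sum]
  refine Finset.sum_congr rfl fun p _ => ?_
  simp [z2d, RCLike.inner_apply, pow_add, map_mul, map_pow]

lemma inner_z2dinf (d : ℕ) (ξ : H2d d) (hd : 0 < d) :
    inner ℂ (z2dinf d) ξ = ξ (1, ⟨d - 1, by omega⟩) := by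
  rw [PiLp.inner_apply]
  rw [Finset.sum_eq_single (1, (⟨d - 1, by omega⟩ : Fin d))]
  · simp [z2dinf, RCLike.inner_apply]
  · intro p _ hp
    have : z2dinf d p = 0 := by
      simp only [z2dinf]
      rcases p with ⟨s, r⟩
      by_cases hs : s = 1
      · by_cases hr : (r : ℕ) = d - 1
        · exfalso; apply hp; subst hs; congr 1; exact Fin.ext hr
        · simp [hr]
      · simp [hs]
    simp [this, RCLike.inner_apply]
  · intro h; exact absurd (Finset.mem_univ _) h

lemma mem_SP2d (d : ℕ) (hd : 0 < d) (ξ : H2d d) :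
    ξ ∈ SP2d d ↔ Pxi d ξ = 0 ∧ ξ (1, ⟨d - 1, by omega⟩) = 0 := by
  rw [SP2d, F2d, Submodule.mem_orthogonal]
  constructor
  · intro h
    have hz : ∀ f ∈ insert (z2dinf d) (Set.range (z2d d)), inner ℂ f ξ = (0:ℂ) :=
      fun f hf => h f (Submodule.subset_span hf)
    constructor
    · apply Polynomial.funext (q := 0)
      intro mu
      have := hz (z2d d (starRingEnd ℂ mu)) (Set.mem_insert_iff.2 (Or.inr ⟨_, rfl⟩))
      rw [inner_z2d] at this
      simpa using this
    · have := hz (z2dinf d) (Set.mem_insert _ _)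
      rwa [inner_z2dinf d ξ hd] at this
  · rintro ⟨hP, hlast⟩ f hf
    induction hf using Submodule.span_induction with
    | mem f hf =>
      rcases hf with hf | ⟨lam, rfl⟩
      · subst hf; rw [inner_z2dinf d ξ hd]; exact hlast
      · rw [inner_z2d, hP]; simp
    | zero => simp
    | add x y _ _ hx hy => rw [inner_add_left, hx, hy, add_zero]
    | smul a x _ hx => rw [inner_smul_left, hx, mul_zero]
def gpoly (d : ℕ) : Polynomial ℂ := ∑ r : Fin d, X ^ (r : ℕ)

def Qpoly (d : ℕ) : Polynomial ℂ := (1 + X) * gpoly d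

lemma z2d_one_eq (d : ℕ) : z2d d 1 = tp2d d (WithLp.toLp 2 fun _ => 1) (WithLp.toLp 2 fun _ => 1) := by
  ext p; simp [z2d, tp2d]

lemma Pxi_z2d_one (d : ℕ) : Pxi d (z2d d 1) = Qpoly d := by
  rw [z2d_one_eq, Pxi_tp2d, Qpoly, Upoly, Vpoly, gpoly]
  simp

lemma mem_SP2d1 (d : ℕ) (hd : 0 < d) (ξ : H2d d) :
    ξ ∈ SP2d1 d ↔ ∃ c : ℂ, Pxi d ξ = C c * Qpoly d ∧ ξ (1, ⟨d - 1, by omega⟩) = c := by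
  have key : ξ ∈ SP2d1 d ↔ ∃ c : ℂ, ξ - c • z2d d 1 ∈ SP2d d := by
    rw [SP2d1, Submodule.mem_sup]
    constructor
    · rintro ⟨y, hy, z, hz, rfl⟩
      rcases Submodule.mem_span_singleton.1 hz with ⟨c, rfl⟩
      exact ⟨c, by simpa using hy⟩
    · rintro ⟨c, hc⟩
      exact ⟨ξ - c • z2d d 1, hc, c • z2d d 1,
        Submodule.mem_span_singleton.2 ⟨c, rfl⟩, by abel⟩
  rw [key]
  apply exists_congr; intro c
  rw [mem_SP2d d hd, Pxi_sub_smul, Pxi_z2d_one]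
  have h1 : (ξ - c • z2d d 1) (1, ⟨d - 1, by omega⟩) = ξ (1, ⟨d - 1, by omega⟩) - c := by
    have : (ξ - c • z2d d 1) (1, ⟨d - 1, by omega⟩)
        = ξ (1, ⟨d - 1, by omega⟩) - c * z2d d 1 (1, ⟨d - 1, by omega⟩) := rfl
    rw [this]; simp [z2d]
  rw [h1, sub_eq_zero, sub_eq_zero]
lemma coeff_Vpoly (d : ℕ) (v : EuclideanSpace ℂ (Fin d)) (r : Fin d) :
    (Vpoly d v).coeff r = v r := by
  rw [Vpoly, finset_sum_coeff]
  rw [Finset.sum_eq_single r]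
  · simp
  · intro b _ hb
    simp only [coeff_C_mul, coeff_X_pow]
    rw [if_neg (by simpa [Fin.ext_iff] using fun h => hb (Fin.ext h.symm)), mul_zero]
  · intro h; exact absurd (Finset.mem_univ _) h

lemma Vpoly_inj (d : ℕ) (v w : EuclideanSpace ℂ (Fin d)) (h : Vpoly d v = Vpoly d w) :
    v = w := by
  ext r
  rw [← coeff_Vpoly d v r, ← coeff_Vpoly d w r, h]

lemma Vpoly_smul (d : ℕ) (a : ℂ) (v : EuclideanSpace ℂ (Fin d)) :
    Vpoly d (a • v) = C a * Vpoly d v := by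
  rw [Vpoly, Vpoly, Finset.mul_sum]
  refine Finset.sum_congr rfl fun r _ => ?_
  have : (a • v) r = a * v r := rfl
  rw [this, map_mul]; ring

lemma gpoly_eq (d : ℕ) : gpoly d = Vpoly d (WithLp.toLp 2 fun _ => 1) := by
  simp [gpoly, Vpoly]

lemma gpoly_geom (d : ℕ) : (X - 1) * gpoly d = X ^ d - 1 := by
  rw [gpoly, Fin.sum_univ_eq_sum_range (fun r => (X : Polynomial ℂ) ^ r), mul_geom_sum]

def gmpoly (d : ℕ) (x : ℂ) : Polynomial ℂ := Vpoly d (WithLp.toLp 2 fun r : Fin d => x ^ (r : ℕ))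

lemma gmpoly_geom (d : ℕ) (x : ℂ) :
    (C x * X - 1) * gmpoly d x = C x ^ d * X ^ d - 1 := by
  have : gmpoly d x = ∑ i ∈ Finset.range d, (C x * X) ^ i := by
    rw [gmpoly, Vpoly]
    simp only [PiLp.toLp_apply]
    rw [Fin.sum_univ_eq_sum_range (fun r => C (x ^ r) * X ^ r)]
    refine Finset.sum_congr rfl fun i _ => ?_
    rw [map_pow, mul_pow]
  rw [this, mul_geom_sum, mul_pow]

lemma cvec_decomp (d : ℕ) (a : ℂ) (ha : 1 + a ≠ 0) :
    (1 + a) • cvec d a = (2 : ℂ) • (WithLp.toLp 2 fun _ => 1 : EuclideanSpace ℂ (Fin d))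
      + (a - 1) • (WithLp.toLp 2 fun r : Fin d => (-a) ^ (r : ℕ) : EuclideanSpace ℂ (Fin d)) := by
  ext r
  have h1 : ((1 + a) • cvec d a) r = (1 + a) * cvec d a r := rfl
  have h2 : ((2 : ℂ) • (WithLp.toLp 2 fun _ => 1 : EuclideanSpace ℂ (Fin d))
      + (a - 1) • (WithLp.toLp 2 fun r : Fin d => (-a) ^ (r : ℕ) : EuclideanSpace ℂ (Fin d))) r
      = 2 + (a - 1) * (-a) ^ (r : ℕ) := by
    show (2 : ℂ) * 1 + (a - 1) * (-a) ^ (r : ℕ) = _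
    ring
  rw [h1, h2, cvec, PiLp.toLp_apply, neg_pow]
  field_simp
  ring

/-- Key polynomial identity -/
lemma key_identity (d : ℕ) (a : ℂ) (ha : 1 + a ≠ 0) (had : a ^ d = (-1) ^ d) :
    (1 + C a * X) * Vpoly d (cvec d a) = Qpoly d := by
  have hC : C (1 + a) ≠ 0 := Polynomial.C_ne_zero.mpr ha
  apply mul_left_cancel₀ hC
  have hVadd : ∀ v w : EuclideanSpace ℂ (Fin d), Vpoly d (v + w) = Vpoly d v + Vpoly d w := by
    intro v w
    rw [Vpoly, Vpoly, Vpoly, ← Finset.sum_add_distrib]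
    refine Finset.sum_congr rfl fun r _ => ?_
    have : (v + w) r = v r + w r := rfl
    rw [this, map_add]; ring
  have hV : C (1 + a) * Vpoly d (cvec d a)
      = C 2 * gpoly d + C (a - 1) * gmpoly d (-a) := by
    rw [← Vpoly_smul, cvec_decomp d a ha, hVadd, Vpoly_smul, Vpoly_smul, ← gpoly_eq, ← gmpoly]
  have hg := gpoly_geom d
  have hm := gmpoly_geom d (-a)
  have hmd : (C (-a)) ^ d = 1 := by
    rw [← map_pow, neg_pow, had, ← mul_pow]
    norm_num
  rw [hmd, one_mul] at hm
  rw [show C (1 + a) * ((1 + C a * X) * Vpoly d (cvec d a))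
      = (1 + C a * X) * (C (1 + a) * Vpoly d (cvec d a)) by ring, hV, Qpoly]
  simp only [map_add, map_sub, map_neg, map_one, map_ofNat] at *
  linear_combination (C a - 1) * hg - (C a - 1) * hm
lemma alpha_eq (d t : ℕ) : alpha2d d t = -(Complex.exp (2 * Real.pi * Complex.I / d)) ^ t := by
  rw [alpha2d, ← Complex.exp_nat_mul]
  congr 1
  ring

lemma alpha_pow_d (d t : ℕ) (hd : d ≠ 0) : alpha2d d t ^ d = (-1) ^ d := by
  rw [alpha_eq, neg_pow]
  have h := (Complex.isPrimitiveRoot_exp d hd).pow_eq_one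
  rw [← pow_mul, mul_comm t d, pow_mul, h, one_pow, mul_one]

lemma alpha_ne_neg_one (d t : ℕ) (hd : d ≠ 0) (ht1 : 1 ≤ t) (ht2 : t ≤ d - 1) :
    alpha2d d t ≠ -1 := by
  rw [alpha_eq]
  intro h
  have h2 : (Complex.exp (2 * Real.pi * Complex.I / d)) ^ t = 1 := neg_injective h
  have := ((Complex.isPrimitiveRoot_exp d hd).pow_eq_one_iff_dvd t).1 h2
  have := Nat.le_of_dvd (by omega) this
  omega

lemma alpha_inj (d : ℕ) (hd : d ≠ 0) (t t' : ℕ) (ht1 : 1 ≤ t) (ht2 : t ≤ d - 1)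
    (ht1' : 1 ≤ t') (ht2' : t' ≤ d - 1) (h : alpha2d d t = alpha2d d t') : t = t' := by
  rw [alpha_eq, alpha_eq] at h
  exact (Complex.isPrimitiveRoot_exp d hd).pow_inj (by omega) (by omega) (neg_injective h)

lemma alpha_ne_one (d t : ℕ) (hd : d ≠ 0) (ht1 : 1 ≤ t) (ht2 : t ≤ d - 1) (ht3 : 2 * t ≠ d) :
    alpha2d d t ≠ 1 := by
  rw [alpha_eq]
  intro h
  have h2 : (Complex.exp (2 * Real.pi * Complex.I / d)) ^ (2 * t) = 1 := by
    have ht : (Complex.exp (2 * Real.pi * Complex.I / d)) ^ t = -1 := by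
      have := congrArg Neg.neg h; simpa using this
    rw [mul_comm 2 t, pow_mul, ht]; norm_num
  obtain ⟨k, hk⟩ := ((Complex.isPrimitiveRoot_exp d hd).pow_eq_one_iff_dvd (2 * t)).1 h2
  rcases k with _ | _ | k
  · omega
  · omega
  · have h5 : 2 * t = d * k + 2 * d := by rw [hk]; ring
    have h6 : 2 * d ≤ 2 * t := h5 ▸ Nat.le_add_left (2 * d) (d * k)
    omega

lemma cvec_zero (d : ℕ) (a : ℂ) (ha : 1 + a ≠ 0) (r : Fin d) (hr : (r : ℕ) = 0) :
    cvec d a r = 1 := by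
  rw [cvec, PiLp.toLp_apply, hr]
  field_simp
  ring

lemma cvec_last (d : ℕ) (hd : 0 < d) (a : ℂ) (ha : 1 + a ≠ 0) (had : a ^ d = (-1) ^ d)
    (r : Fin d) (hr : (r : ℕ) = d - 1) : a * cvec d a r = 1 := by
  obtain ⟨e, rfl⟩ : ∃ e, d = e + 1 := ⟨d - 1, by omega⟩
  have hkey : (-1 : ℂ) ^ e * a ^ e * a = -1 := by
    rw [mul_assoc, ← pow_succ, had, ← pow_add]
    exact Odd.neg_one_pow ⟨e, by ring⟩
  rw [cvec, PiLp.toLp_apply, hr]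
  simp only [Nat.add_sub_cancel]
  field_simp
  linear_combination (a - 1) * hkey

lemma uapp0 (a : ℂ) : (ket2 0 + a • ket2 1) 0 = 1 := by
  have : (ket2 0 + a • ket2 1) 0 = ket2 0 0 + a * ket2 1 0 := rfl
  rw [this]; simp [ket2, EuclideanSpace.single_apply]

lemma uapp1 (a : ℂ) : (ket2 0 + a • ket2 1) 1 = a := by
  have : (ket2 0 + a • ket2 1) 1 = ket2 0 1 + a * ket2 1 1 := rfl
  rw [this]; simp [ket2, EuclideanSpace.single_apply]
lemma pvec_apply (d t : ℕ) (p : Fin 2 × Fin d) :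
    pvec d t p = (if p.1 = 0 then 1 else alpha2d d t) * cvec d (alpha2d d t) p.2 := by
  rw [pvec, tp2d]
  rcases p with ⟨s, r⟩
  fin_cases s
  · simp [ket2, EuclideanSpace.single_apply]
  · simp [ket2, EuclideanSpace.single_apply]

lemma pvec_ne_zero (d t : ℕ) (hd : 0 < d) (ht1 : 1 ≤ t) (ht2 : t ≤ d - 1) :
    pvec d t ≠ 0 := by
  have ha : 1 + alpha2d d t ≠ 0 := by
    intro h
    exact alpha_ne_neg_one d t (by omega) ht1 ht2 (by linear_combination h)
  intro h
  have h0 := congrFun (congrArg WithLp.ofLp h) (0, (⟨0, hd⟩ : Fin d))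
  rw [pvec_apply] at h0
  simp [cvec_zero d _ ha ⟨0, hd⟩ rfl] at h0

lemma Upoly_uvec (a : ℂ) : Upoly (ket2 0 + a • ket2 1) = 1 + C a * X := by
  rw [Upoly, uapp0, uapp1, map_one]

lemma pvec_mem (d t : ℕ) (hd : 0 < d) (ht1 : 1 ≤ t) (ht2 : t ≤ d - 1) :
    pvec d t ∈ SP2d1 d := by
  have ha : 1 + alpha2d d t ≠ 0 := by
    intro h
    exact alpha_ne_neg_one d t (by omega) ht1 ht2 (by linear_combination h)
  have had := alpha_pow_d d t (by omega)
  rw [mem_SP2d1 d hd]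
  refine ⟨1, ?_, ?_⟩
  · rw [pvec, Pxi_tp2d, Upoly_uvec, key_identity d _ ha had, map_one, one_mul]
  · have := cvec_last d hd (alpha2d d t) ha had ⟨d - 1, by omega⟩ rfl
    rw [pvec_apply]
    simpa using this
lemma Upoly_coeff0 (u : EuclideanSpace ℂ (Fin 2)) : (Upoly u).coeff 0 = u 0 := by
  simp [Upoly]

lemma Upoly_coeff1 (u : EuclideanSpace ℂ (Fin 2)) : (Upoly u).coeff 1 = u 1 := by
  simp [Upoly]

lemma tp2d_eq_zero_left (d : ℕ) (v : EuclideanSpace ℂ (Fin d)) : tp2d d 0 v = 0 := by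
  ext p
  show (0 : EuclideanSpace ℂ (Fin 2)) p.1 * v p.2 = 0
  simp

lemma tp2d_eq_zero_right (d : ℕ) (u : EuclideanSpace ℂ (Fin 2)) : tp2d d u 0 = 0 := by
  ext p
  show u p.1 * (0 : EuclideanSpace ℂ (Fin d)) p.2 = 0
  simp

lemma Vpoly_zero (d : ℕ) : Vpoly d 0 = 0 := by
  rw [Vpoly]
  apply Finset.sum_eq_zero
  intro r _
  show C ((0 : EuclideanSpace ℂ (Fin d)) r) * X ^ (r : ℕ) = 0
  simp

lemma eval_one_gpoly (d : ℕ) : eval 1 (gpoly d) = d := by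
  rw [gpoly, eval_finset_sum]
  simp

lemma eval_zero_gpoly (d : ℕ) (hd : 0 < d) : eval 0 (gpoly d) = 1 := by
  rw [gpoly, eval_finset_sum]
  rw [Finset.sum_eq_single (⟨0, hd⟩ : Fin d)]
  · simp
  · intro b _ hb
    have : (b : ℕ) ≠ 0 := fun h => hb (Fin.ext h)
    simp [this]
  · intro h; exact absurd (Finset.mem_univ _) h

lemma onePlus_ne (a : ℂ) : (1 + C a * X : Polynomial ℂ) ≠ 0 := by
  intro h
  have := congrArg (eval 0) h
  simp at this

lemma classify (d : ℕ) (hd : 2 < d) (u : EuclideanSpace ℂ (Fin 2))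
    (v : EuclideanSpace ℂ (Fin d)) (hne : tp2d d u v ≠ 0) (hmem : tp2d d u v ∈ SP2d1 d) :
    Submodule.span ℂ {tp2d d u v} = Submodule.span ℂ {z2d d 1} ∨
    ∃ t : ℕ, 1 ≤ t ∧ t ≤ d - 1 ∧ 2 * t ≠ d ∧
      Submodule.span ℂ {tp2d d u v} = Submodule.span ℂ {pvec d t} := by
  have hd0 : (0:ℕ) < d := by omega
  obtain ⟨c, hP, hlast⟩ := (mem_SP2d1 d hd0 _).1 hmem
  rw [Pxi_tp2d] at hP
  have hlast' : u 1 * v ⟨d - 1, by omega⟩ = c := hlast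
  -- c ≠ 0
  have hc : c ≠ 0 := by
    rintro rfl
    rw [map_zero, zero_mul] at hP
    rcases mul_eq_zero.1 hP with h | h
    · apply hne
      have h0 : u 0 = 0 := by rw [← Upoly_coeff0 u, h]; simp
      have h1 : u 1 = 0 := by rw [← Upoly_coeff1 u, h]; simp
      have hu : u = 0 := by
        ext i
        fin_cases i
        · exact h0
        · exact h1
      rw [hu, tp2d_eq_zero_left]
    · apply hne
      have hv : v = 0 := Vpoly_inj d v 0 (by rw [h, Vpoly_zero])
      rw [hv, tp2d_eq_zero_right]
  have hu1 : u 1 ≠ 0 := fun h => hc (by rw [← hlast', h, zero_mul])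
  -- evaluation at 0
  have hQ0 : eval 0 (Qpoly d) = 1 := by
    rw [Qpoly, eval_mul, eval_zero_gpoly d hd0]
    simp
  have hu0 : u 0 ≠ 0 := by
    intro h0
    have := congrArg (eval 0) hP
    rw [eval_mul, eval_mul, hQ0, eval_C, mul_one] at this
    rw [Upoly, eval_add, eval_C, eval_mul, eval_C, eval_X, mul_zero, add_zero, h0] at this
    exact hc (by rw [← this, zero_mul])
  set β := -(u 0 / u 1) with hβdef
  have hβ0 : β ≠ 0 := by
    simp only [hβdef, neg_ne_zero, div_ne_zero_iff]
    exact ⟨hu0, hu1⟩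
  have hUβ : eval β (Upoly u) = 0 := by
    simp only [Upoly, eval_add, eval_mul, eval_C, eval_X, hβdef]
    field_simp
    ring
  have hQβ : eval β (Qpoly d) = 0 := by
    have := congrArg (eval β) hP
    rw [eval_mul, eval_mul, hUβ, zero_mul, eval_C] at this
    exact (mul_eq_zero.1 this.symm).resolve_left hc
  have hβ1 : β ≠ 1 := by
    intro h
    rw [h, Qpoly, eval_mul, eval_one_gpoly] at hQβ
    simp only [eval_add, eval_one, eval_X] at hQβ
    have : (d : ℂ) ≠ 0 := Nat.cast_ne_zero.2 (by omega)
    rcases mul_eq_zero.1 hQβ with h' | h'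
    · norm_num at h'
    · exact this h'
  have hgeom : (β - 1) * eval β (gpoly d) = β ^ d - 1 := by
    have := congrArg (eval β) (gpoly_geom d)
    simp only [eval_mul, eval_sub, eval_pow, eval_X, eval_one] at this
    exact this
  by_cases hβneg : β = -1
  · -- leads to the z₁ line
    left
    have huu : u 0 = u 1 := by
      have : -(u 0 / u 1) = -1 := hβneg
      field_simp at this
      exact neg_inj.1 this
    have hU : Upoly u = C (u 1) * (1 + X) := by
      rw [Upoly, huu]
      ring
    rw [hU] at hP
    have hQsplit : C c * Qpoly d = C c * gpoly d * (1 + X) := by rw [Qpoly]; ring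
    rw [hQsplit] at hP
    have hfactor : (1 + X : Polynomial ℂ) * (C (u 1) * Vpoly d v - C c * gpoly d) = 0 := by
      linear_combination hP
    have h1X : (1 + X : Polynomial ℂ) ≠ 0 := by
      have := onePlus_ne (1 : ℂ)
      simpa using this
    have hVg : C (u 1) * Vpoly d v = C c * gpoly d :=
      sub_eq_zero.1 ((mul_eq_zero.1 hfactor).resolve_left h1X)
    have hvec : u 1 • v = c • (WithLp.toLp 2 fun _ => 1 : EuclideanSpace ℂ (Fin d)) := by
      apply Vpoly_inj
      rw [Vpoly_smul, Vpoly_smul, ← gpoly_eq, hVg]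
    have hxi : tp2d d u v = c • z2d d 1 := by
      ext p
      have hv2 : u 1 * v p.2 = c := by
        have := congrFun (congrArg WithLp.ofLp hvec) p.2
        simpa using this
      have : (c • z2d d 1) p = c := by
        show c * z2d d 1 p = c
        simp [z2d]
      rw [this]
      show u p.1 * v p.2 = c
      rcases p with ⟨s, r⟩
      fin_cases s
      · show u 0 * v r = c
        rw [huu]; exact hv2
      · exact hv2
    rw [hxi]
    exact Submodule.span_singleton_smul_eq (IsUnit.mk0 c hc) _
  · -- leads to a pvec line
    right
    have h1β : (1 : ℂ) + β ≠ 0 := fun h => hβneg (by linear_combination h)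
    have hgβ : eval β (gpoly d) = 0 := by
      rw [Qpoly, eval_mul] at hQβ
      simp only [eval_add, eval_one, eval_X] at hQβ
      rcases mul_eq_zero.1 hQβ with h' | h'
      · exact absurd (by linear_combination h') h1β
      · exact h'
    have hβd : β ^ d = 1 := by
      have := hgeom
      rw [hgβ, mul_zero] at this
      linear_combination -this
    haveI : NeZero d := ⟨by omega⟩
    obtain ⟨s, hs, hβs⟩ := (Complex.isPrimitiveRoot_exp d (by omega)).eq_pow_of_pow_eq_one hβd
    set ω := Complex.exp (2 * Real.pi * Complex.I / d) with hωdef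
    have hω : IsPrimitiveRoot ω d := Complex.isPrimitiveRoot_exp d (by omega)
    have hs0 : s ≠ 0 := by
      rintro rfl
      rw [pow_zero] at hβs
      exact hβ1 hβs.symm
    refine ⟨d - s, by omega, by omega, ?_, ?_⟩
    · -- 2 * (d - s) ≠ d
      intro h2t
      have h2s : 2 * s = d := by omega
      have hβsq : β ^ 2 = 1 := by
        rw [← hβs, ← pow_mul, mul_comm s 2, h2s, hω.pow_eq_one]
      have : (β - 1) * (β + 1) = 0 := by linear_combination hβsq
      rcases mul_eq_zero.1 this with h' | h'
      · exact hβ1 (by linear_combination h')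
      · exact hβneg (by linear_combination h')
    · -- the span equality
      set α := alpha2d d (d - s) with hαdef
      have hαβ : α * β = -1 := by
        rw [hαdef, alpha_eq, ← hωdef, ← hβs, neg_mul, ← pow_add]
        have : d - s + s = d := by omega
        rw [this, hω.pow_eq_one]
      have hαne : 1 + α ≠ 0 := by
        intro h
        exact alpha_ne_neg_one d (d - s) (by omega) (by omega) (by omega)
          (by rw [← hαdef]; linear_combination h)
      have had : α ^ d = (-1) ^ d := alpha_pow_d d (d - s) (by omega)
      have key := key_identity d α hαne had
      have hu1α : u 1 = u 0 * α := by
        have hβval : β = -(u 0 / u 1) := hβdef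
        rw [hβval] at hαβ
        field_simp at hαβ
        linear_combination hαβ
      have hU : Upoly u = C (u 0) * (1 + C α * X) := by
        rw [Upoly, hu1α, map_mul]
        ring
      rw [hU] at hP
      rw [← key] at hP
      have hfactor : (1 + C α * X : Polynomial ℂ)
          * (C (u 0) * Vpoly d v - C c * Vpoly d (cvec d α)) = 0 := by
        linear_combination hP
      have hVV : C (u 0) * Vpoly d v = C c * Vpoly d (cvec d α) :=
        sub_eq_zero.1 ((mul_eq_zero.1 hfactor).resolve_left (onePlus_ne α))
      have hvec : u 0 • v = c • cvec d α := by
        apply Vpoly_inj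
        rw [Vpoly_smul, Vpoly_smul, hVV]
      have hxi : tp2d d u v = c • pvec d (d - s) := by
        ext p
        have hv2 : u 0 * v p.2 = c * cvec d α p.2 := congrFun (congrArg WithLp.ofLp hvec) p.2
        have hpv : (c • pvec d (d - s)) p
            = c * ((if p.1 = 0 then 1 else α) * cvec d α p.2) := by
          show c * pvec d (d - s) p = _
          rw [pvec_apply, ← hαdef]
        rw [hpv]
        show u p.1 * v p.2 = _
        rcases p with ⟨i, r⟩
        fin_cases i
        · simpa using hv2
        · show u 1 * v r = c * (α * cvec d α r)
          rw [hu1α]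
          have : u 0 * α * v r = α * (u 0 * v r) := by ring
          rw [this, hv2]
          ring
      rw [hxi]
      exact Submodule.span_singleton_smul_eq (IsUnit.mk0 c hc) _
lemma z2d_one_ne_zero (d : ℕ) (hd : 0 < d) : z2d d 1 ≠ 0 := by
  intro h
  have := congrFun (congrArg WithLp.ofLp h) (0, (⟨0, hd⟩ : Fin d))
  simp [z2d] at this

lemma z2d_one_mem (d : ℕ) : z2d d 1 ∈ SP2d1 d :=
  Submodule.mem_sup_right (Submodule.mem_span_singleton_self _)

lemma pvec_comp00 (d t : ℕ) (hd : 0 < d) (ht1 : 1 ≤ t) (ht2 : t ≤ d - 1) :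
    pvec d t (0, ⟨0, hd⟩) = 1 := by
  have ha : 1 + alpha2d d t ≠ 0 := fun h =>
    alpha_ne_neg_one d t (by omega) ht1 ht2 (by linear_combination h)
  rw [pvec_apply]
  simp [cvec_zero d _ ha ⟨0, hd⟩ rfl]

lemma pvec_comp10 (d t : ℕ) (hd : 0 < d) (ht1 : 1 ≤ t) (ht2 : t ≤ d - 1) :
    pvec d t (1, ⟨0, hd⟩) = alpha2d d t := by
  have ha : 1 + alpha2d d t ≠ 0 := fun h =>
    alpha_ne_neg_one d t (by omega) ht1 ht2 (by linear_combination h)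
  rw [pvec_apply]
  simp [cvec_zero d _ ha ⟨0, hd⟩ rfl]

lemma span_pvec_inj (d : ℕ) (hd : 2 < d) (t t' : ℕ) (ht1 : 1 ≤ t) (ht2 : t ≤ d - 1)
    (ht1' : 1 ≤ t') (ht2' : t' ≤ d - 1)
    (h : Submodule.span ℂ {pvec d t} = Submodule.span ℂ {pvec d t'}) : t = t' := by
  have hd0 : (0:ℕ) < d := by omega
  have hmem : pvec d t ∈ Submodule.span ℂ {pvec d t'} := by
    rw [← h]; exact Submodule.mem_span_singleton_self _
  obtain ⟨k, hk⟩ := Submodule.mem_span_singleton.1 hmem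
  have h00 : k * pvec d t' (0, ⟨0, hd0⟩) = pvec d t (0, ⟨0, hd0⟩) := congrFun (congrArg WithLp.ofLp hk) _
  have h10 : k * pvec d t' (1, ⟨0, hd0⟩) = pvec d t (1, ⟨0, hd0⟩) := congrFun (congrArg WithLp.ofLp hk) _
  rw [pvec_comp00 d t' hd0 ht1' ht2', pvec_comp00 d t hd0 ht1 ht2, mul_one] at h00
  rw [pvec_comp10 d t' hd0 ht1' ht2', pvec_comp10 d t hd0 ht1 ht2] at h10
  rw [h00, one_mul] at h10
  exact (alpha_inj d (by omega) t' t ht1' ht2' ht1 ht2 h10).symm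

lemma span_z1_ne_span_pvec (d : ℕ) (hd : 2 < d) (t : ℕ) (ht1 : 1 ≤ t) (ht2 : t ≤ d - 1)
    (ht3 : 2 * t ≠ d) :
    Submodule.span ℂ {z2d d 1} ≠ Submodule.span ℂ {pvec d t} := by
  have hd0 : (0:ℕ) < d := by omega
  intro h
  have hmem : z2d d 1 ∈ Submodule.span ℂ {pvec d t} := by
    rw [← h]; exact Submodule.mem_span_singleton_self _
  obtain ⟨k, hk⟩ := Submodule.mem_span_singleton.1 hmem
  have h00 : k * pvec d t (0, ⟨0, hd0⟩) = z2d d 1 (0, ⟨0, hd0⟩) := congrFun (congrArg WithLp.ofLp hk) _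
  have h10 : k * pvec d t (1, ⟨0, hd0⟩) = z2d d 1 (1, ⟨0, hd0⟩) := congrFun (congrArg WithLp.ofLp hk) _
  rw [pvec_comp00 d t hd0 ht1 ht2, mul_one] at h00
  rw [pvec_comp10 d t hd0 ht1 ht2] at h10
  have hz0 : z2d d 1 (0, (⟨0, hd0⟩ : Fin d)) = 1 := by simp [z2d]
  have hz1 : z2d d 1 (1, (⟨0, hd0⟩ : Fin d)) = 1 := by simp [z2d]
  rw [hz0] at h00
  rw [hz1, h00, one_mul] at h10
  exact alpha_ne_one d t (by omega) ht1 ht2 ht3 h10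

theorem statement12' (d : ℕ) (hd : 2 < d) :
    (prodLines2d d (SP2d1 d)).Finite ∧
    (prodLines2d d (SP2d1 d)).ncard = (if Odd d then d else d - 1) ∧
    prodLines2d d (SP2d1 d) =
      insert (Submodule.span ℂ {z2d d 1})
        {L | ∃ t : ℕ, 1 ≤ t ∧ t ≤ d - 1 ∧ 2 * t ≠ d ∧ L = Submodule.span ℂ {pvec d t}} := by
  have hd0 : (0:ℕ) < d := by omega
  set L1 := Submodule.span ℂ {z2d d 1} with hL1
  set A := {L | ∃ t : ℕ, 1 ≤ t ∧ t ≤ d - 1 ∧ 2 * t ≠ d ∧ L = Submodule.span ℂ {pvec d t}}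
    with hA
  -- set equality
  have hset : prodLines2d d (SP2d1 d) = insert L1 A := by
    ext L
    constructor
    · rintro ⟨ξ, hne, hmem, ⟨u, v, rfl⟩, rfl⟩
      rcases classify d hd u v hne hmem with h | ⟨t, ht1, ht2, ht3, h⟩
      · left; rw [h]
      · right; exact ⟨t, ht1, ht2, ht3, h⟩
    · rintro (rfl | ⟨t, ht1, ht2, ht3, rfl⟩)
      · exact ⟨z2d d 1, z2d_one_ne_zero d hd0, z2d_one_mem d,
          ⟨_, _, z2d_one_eq d⟩, rfl⟩
      · exact ⟨pvec d t, pvec_ne_zero d t hd0 ht1 ht2, pvec_mem d t hd0 ht1 ht2,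
          ⟨_, _, rfl⟩, rfl⟩
  -- finite count
  set Tfin : Finset ℕ := (Finset.Icc 1 (d - 1)).filter (fun t => 2 * t ≠ d) with hTfin
  have hAim : A = (fun t => Submodule.span ℂ {pvec d t}) '' ↑Tfin := by
    ext L
    simp only [hA, Set.mem_setOf_eq, Set.mem_image, Finset.coe_filter, Finset.mem_Icc,
      Set.mem_setOf_eq, hTfin]
    constructor
    · rintro ⟨t, h1, h2, h3, rfl⟩; exact ⟨t, ⟨⟨h1, h2⟩, h3⟩, rfl⟩
    · rintro ⟨t, ⟨⟨h1, h2⟩, h3⟩, rfl⟩; exact ⟨t, h1, h2, h3, rfl⟩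
  have hinj : Set.InjOn (fun t => Submodule.span ℂ {pvec d t}) ↑Tfin := by
    intro t ht t' ht' h
    simp only [hTfin, Finset.coe_filter, Finset.mem_Icc, Set.mem_setOf_eq] at ht ht'
    exact span_pvec_inj d hd t t' ht.1.1 ht.1.2 ht'.1.1 ht'.1.2 h
  have hAfin : A.Finite := by
    rw [hAim]; exact (Tfin : Set ℕ).toFinite.image _
  have hL1nA : L1 ∉ A := by
    rw [hA]
    rintro ⟨t, ht1, ht2, ht3, h⟩
    exact span_z1_ne_span_pvec d hd t ht1 ht2 ht3 h
  have hTcard : Tfin.card = (if Odd d then d else d - 1) - 1 := by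
    by_cases hodd : Odd d
    · rw [if_pos hodd, hTfin]
      rw [Finset.filter_true_of_mem]
      · rw [Nat.card_Icc]; omega
      · intro t _
        intro h
        exact (Nat.not_even_iff_odd.2 hodd) ⟨t, by omega⟩
    · rw [if_neg hodd]
      obtain ⟨m, hm⟩ := Nat.not_odd_iff_even.1 hodd
      have hcond : ∀ t, (2 * t ≠ d) ↔ t ≠ m := by intro t; omega
      rw [hTfin]
      rw [Finset.filter_congr (fun t _ => by rw [hcond t])]
      rw [Finset.filter_ne']
      rw [Finset.card_erase_of_mem (by simp [Finset.mem_Icc]; omega)]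
      rw [Nat.card_Icc]; omega
  have hncardA : A.ncard = (if Odd d then d else d - 1) - 1 := by
    rw [hAim, Set.ncard_image_of_injOn hinj, Set.ncard_coe_finset, hTcard]
  refine ⟨?_, ?_, hset⟩
  · rw [hset]; exact hAfin.insert L1
  · rw [hset, Set.ncard_insert_of_notMem hL1nA hAfin, hncardA]
    have : (if Odd d then d else d - 1) ≥ 1 := by split <;> omega
    omega

theorem statement12 (d : ℕ) (hd : 2 < d) :
    (prodLines2d d (SP2d1 d)).Finite ∧
    (prodLines2d d (SP2d1 d)).ncard = (if Odd d then d else d - 1) ∧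
    prodLines2d d (SP2d1 d) =
      insert (Submodule.span ℂ {z2d d 1})
        {L | ∃ t : ℕ, 1 ≤ t ∧ t ≤ d - 1 ∧ 2 * t ≠ d ∧ L = Submodule.span ℂ {pvec d t}} := by
  exact statement12' d hd
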